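/- Set r = 4 − √14 and s = 6 − 3√2 − √(42 − 28√2). There exist points a₁, a₂, a₃, b₁, b₂, b₃, p ∈ ℝ³ such that dist(aᵢ, aⱼ) = 2 and dist(bᵢ, bⱼ) = 2r for all i ≠ j, dist(aᵢ, bⱼ) = 1 + r for all i ≠ j, dist(p, aᵢ) = 1 + s and dist(p, bᵢ) = r + s for all i. (A sphere of radius s fills the octahedral hole whose shell is an octahedron with one face of three mutually tangent unit spheres and the opposite face of three mutually tangent spheres of radius r.) -/

import Mathlib

open Real

private theorem sqrt_eq_of_sq' (X T : ℝ) (h1 : 0 ≤ T) (h2 : X = T ^ 2) :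
    Real.sqrt X = T := by rw [h2]; exact Real.sqrt_sq h1

set_option maxHeartbeats 4000000 in
/-- With `r = 4 − √14` and `s = 6 − 3√2 − √(42 − 28√2)`, there exists an octahedral
configuration with one face of three mutually tangent unit spheres (centers `aᵢ`,
pairwise distances 2) and the opposite face of three mutually tangent spheres of
radius `r` (centers `bᵢ`, pairwise distances `2r`), where `aᵢ` is tangent to `bⱼ` for
`i ≠ j` (opposite pairs `aᵢ, bᵢ` are not adjacent), and a central sphere of radius `s`
(center `p`) tangent to all six. -/
theorem sphere_fills_mixed_octahedral_hole :
    let r : ℝ := 4 - Real.sqrt 14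
    let s : ℝ := 6 - 3 * Real.sqrt 2 - Real.sqrt (42 - 28 * Real.sqrt 2)
    ∃ (a b : Fin 3 → EuclideanSpace ℝ (Fin 3)) (p : EuclideanSpace ℝ (Fin 3)),
      (∀ i j, i ≠ j → dist (a i) (a j) = 2) ∧
      (∀ i j, i ≠ j → dist (b i) (b j) = 2 * r) ∧
      (∀ i j, i ≠ j → dist (a i) (b j) = 1 + r) ∧
      (∀ i, dist p (a i) = 1 + s) ∧
      (∀ i, dist p (b i) = r + s) := by
  intro r s
  have e2sq : (√2 : ℝ) ^ 2 = 2 := Real.sq_sqrt (by norm_num)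
  have e3sq : (√3 : ℝ) ^ 2 = 3 := Real.sq_sqrt (by norm_num)
  have e7sq : (√7 : ℝ) ^ 2 = 7 := Real.sq_sqrt (by norm_num)
  have e14sq : (√14 : ℝ) ^ 2 = 14 := Real.sq_sqrt (by norm_num)
  have nn2 : (0:ℝ) ≤ √2 := Real.sqrt_nonneg 2
  have nn7 : (0:ℝ) ≤ √7 := Real.sqrt_nonneg 7
  have nn14 : (0:ℝ) ≤ √14 := Real.sqrt_nonneg 14
  have b2l : (1.4142 : ℝ) ≤ √2 := by nlinarith [e2sq, nn2]
  have b2u : (√2 : ℝ) ≤ 1.41422 := by nlinarith [e2sq, nn2]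
  have b7l : (2.6457 : ℝ) ≤ √7 := by nlinarith [e7sq, nn7]
  have b7u : (√7 : ℝ) ≤ 2.64576 := by nlinarith [e7sq, nn7]
  have h14 : (√14 : ℝ) = √2 * √7 := by
    rw [show (14:ℝ) = 2 * 7 by norm_num]; exact Real.sqrt_mul (by norm_num) 7
  have h42 : Real.sqrt (42 - 28 * √2) = 2 * √7 - √2 * √7 := by
    rw [show (42:ℝ) - 28 * √2 = (2 * √7 - √2 * √7) ^ 2 from by
      linear_combination (-(√7 : ℝ)^2) * e2sq + (-6 + 4*√2) * e7sq]
    exact Real.sqrt_sq (by nlinarith [b2u, b7l])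
  have hr : r = 4 - √14 := rfl
  have hs : s = 6 - 3*√2 - 2*√7 + √2*√7 := by
    show 6 - 3 * Real.sqrt 2 - Real.sqrt (42 - 28 * Real.sqrt 2) = _
    rw [h42]; ring
  have rnn : 0 ≤ r := by rw [hr]; nlinarith [e14sq, nn14]
  have snn : (0.2 : ℝ) ≤ s := by rw [hs]; nlinarith [b2l, b2u, b7l, b7u]
  have Knn : (0:ℝ) ≤ 14/3 - 10*√2 + 8/3*(√2*√7) := by nlinarith [b2l, b2u, b7l, b7u]
  have h2nn : (0:ℝ) ≤ (9 - 2*√14)/3 := by nlinarith [e14sq, nn14]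
  have z2nn : (0:ℝ) ≤ (1+s)^2 - 4/3 := by nlinarith [snn]
  set h : ℝ := Real.sqrt ((9 - 2*√14)/3) with hh
  set z : ℝ := Real.sqrt ((1+s)^2 - 4/3) with hz
  have hsq : h ^ 2 = (9 - 2*√14)/3 := Real.sq_sqrt h2nn
  have hzsq : z ^ 2 = (1+s)^2 - 4/3 := Real.sq_sqrt z2nn
  have hzK : 2*(h*z) = 14/3 - 10*√2 + 8/3*(√2*√7) := by
    rw [hh, hz, ← Real.sqrt_mul h2nn]
    rw [show ((9 - 2*√14)/3) * ((1+s)^2 - 4/3)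
        = ((14/3 - 10*√2 + 8/3*(√2*√7))/2) ^ 2 from by
      linear_combination
        (24 - 6*√7 - 9*√2 + 3*(√2*√7) - (16/3)*√14 + (4/3)*(√14*√7) + 2*(√14*√2)
          - (2/3)*(√14*√2*√7) + 3*s - (2/3)*(s*√14)) * hs
        + ((-286/9) + (56/3)*√7 - (8/3)*(√7)^2 + 28*√2 - (52/3)*(√2*√7)
          + (8/3)*(√2*(√7)^2) - 6*(√2)^2 + 4*((√2)^2*√7) - (2/3)*((√2)^2*(√7)^2)) * h14
        + (2 + (70/3)*√7 - (145/9)*(√7)^2 + (8/3)*(√7)^3 - 6*(√2*√7)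
          + 4*(√2*(√7)^2) - (2/3)*(√2*(√7)^3)) * e2sq
        + ((-182/9) + (16/3)*√7 + (44/3)*√2 - 4*(√2*√7)) * e7sq]
    rw [Real.sqrt_sq (by linarith [Knn])]
    ring
  refine ⟨![!₂[2*(√3/3), 0, 0], !₂[-(√3/3), 1, 0], !₂[-(√3/3), -1, 0]],
          ![!₂[-(2*(√3/3)*r), 0, h], !₂[(√3/3)*r, -r, h], !₂[(√3/3)*r, r, h]],
          !₂[0, 0, z], ?_, ?_, ?_, ?_, ?_⟩
  · intro i j hij
    fin_cases i <;> fin_cases j <;>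
      first
        | exact absurd rfl hij
        | (simp only [show (⟨2, by omega⟩ : Fin 3) = 2 from rfl, EuclideanSpace.dist_eq,
            Fin.sum_univ_three, Real.dist_eq, sq_abs,
            Matrix.cons_val_zero, Matrix.cons_val_one, Matrix.head_cons, Matrix.cons_val_two,
            Matrix.tail_cons, Fin.mk_zero, Fin.mk_one, Fin.isValue, PiLp.toLp_apply]
           first
            | exact sqrt_eq_of_sq' _ _ (by norm_num) (by linear_combination e3sq)
            | exact sqrt_eq_of_sq' _ _ (by norm_num) (by ring))
  · intro i j hij
    fin_cases i <;> fin_cases j <;>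
      first
        | exact absurd rfl hij
        | (simp only [show (⟨2, by omega⟩ : Fin 3) = 2 from rfl, EuclideanSpace.dist_eq,
            Fin.sum_univ_three, Real.dist_eq, sq_abs,
            Matrix.cons_val_zero, Matrix.cons_val_one, Matrix.head_cons, Matrix.cons_val_two,
            Matrix.tail_cons, Fin.mk_zero, Fin.mk_one, Fin.isValue, PiLp.toLp_apply]
           first
            | exact sqrt_eq_of_sq' _ _ (by linarith) (by
                linear_combination
                  (-12 + 4*(√3)^2 + 3*√14 - √14*(√3)^2 - 3*r + r*(√3)^2) * hr
                  + (24 - 8*(√3)^2 - 3*(√2*√7) + √2*(√3)^2*√7 - 3*√14 + √14*(√3)^2) * h14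
                  + (16 - 8*(√2*√7) + (√2)^2*(√7)^2) * e3sq)
            | exact sqrt_eq_of_sq' _ _ (by linarith) (by ring))
  · intro i j hij
    fin_cases i <;> fin_cases j <;>
      first
        | exact absurd rfl hij
        | (simp only [show (⟨2, by omega⟩ : Fin 3) = 2 from rfl, EuclideanSpace.dist_eq,
            Fin.sum_univ_three, Real.dist_eq, sq_abs,
            Matrix.cons_val_zero, Matrix.cons_val_one, Matrix.head_cons, Matrix.cons_val_two,
            Matrix.tail_cons, Fin.mk_zero, Fin.mk_one, Fin.isValue, PiLp.toLp_apply]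
           first
            | exact sqrt_eq_of_sq' _ _ (by linarith) (by
                linear_combination hsq
                  + (-2 - (1/9)*(√14*(√3)^2) + (1/9)*(r*(√3)^2)) * hr
                  + (4/3 - (4/9)*(√3)^2 + (1/9)*(√2*(√3)^2*√7) + (1/9)*(√14*(√3)^2)) * h14
                  + (4/9 - (4/9)*(√2*√7) + (1/9)*((√2)^2*(√7)^2)) * e3sq
                  + ((1/3)*(√7)^2) * e2sq + (2/3) * e7sq)
            | exact sqrt_eq_of_sq' _ _ (by linarith) (by
                linear_combination hsq
                  + (-6 + (4/3)*(√3)^2 + √14 - (4/9)*(√14*(√3)^2) - r + (4/9)*(r*(√3)^2)) * hr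
                  + (28/3 - (28/9)*(√3)^2 - √2*√7 + (4/9)*(√2*(√3)^2*√7) - √14
                    + (4/9)*(√14*(√3)^2)) * h14
                  + (49/9 - (28/9)*(√2*√7) + (4/9)*((√2)^2*(√7)^2)) * e3sq
                  + ((1/3)*(√7)^2) * e2sq + (2/3) * e7sq)
            | exact sqrt_eq_of_sq' _ _ (by linarith) (by
                linear_combination hsq
                  + (-4 + (2/3)*(√3)^2 - (1/9)*(√14*(√3)^2) + (1/9)*(r*(√3)^2)) * hr
                  + (10/3 - (10/9)*(√3)^2 + (1/9)*(√2*(√3)^2*√7) + (1/9)*(√14*(√3)^2)) * h14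
                  + (25/9 - (10/9)*(√2*√7) + (1/9)*((√2)^2*(√7)^2)) * e3sq
                  + ((1/3)*(√7)^2) * e2sq + (2/3) * e7sq))
  · intro i
    fin_cases i <;>
      (simp only [show (⟨2, by omega⟩ : Fin 3) = 2 from rfl, EuclideanSpace.dist_eq,
          Fin.sum_univ_three, Real.dist_eq, sq_abs,
          Matrix.cons_val_zero, Matrix.cons_val_one, Matrix.head_cons, Matrix.cons_val_two,
          Matrix.tail_cons, Fin.mk_zero, Fin.mk_one, Fin.isValue, PiLp.toLp_apply]
       first
        | exact sqrt_eq_of_sq' _ _ (by linarith) (by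
            linear_combination hzsq + (4/9) * e3sq)
        | exact sqrt_eq_of_sq' _ _ (by linarith) (by
            linear_combination hzsq + (1/9) * e3sq))
  · intro i
    fin_cases i <;>
      (simp only [show (⟨2, by omega⟩ : Fin 3) = 2 from rfl, EuclideanSpace.dist_eq,
          Fin.sum_univ_three, Real.dist_eq, sq_abs,
          Matrix.cons_val_zero, Matrix.cons_val_one, Matrix.head_cons, Matrix.cons_val_two,
          Matrix.tail_cons, Fin.mk_zero, Fin.mk_one, Fin.isValue, PiLp.toLp_apply]
       first
        | exact sqrt_eq_of_sq' _ _ (by linarith) (by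
            linear_combination (-1) * hzK + hsq + hzsq + (2 - 2*r) * hs
              + (-16 + 4*√7 + (16/9)*(√3)^2 + 6*√2 - 2*(√2*√7) + √14 - (4/9)*(√14*(√3)^2)
                - r + (4/9)*(r*(√3)^2)) * hr
              + (58/3 - 4*√7 - (32/9)*(√3)^2 - 6*√2 + √2*√7 + (4/9)*(√2*(√3)^2*√7) - √14
                + (4/9)*(√14*(√3)^2)) * h14
              + (64/9 - (32/9)*(√2*√7) + (4/9)*((√2)^2*(√7)^2)) * e3sq
              + ((-6)*√7 + (7/3)*(√7)^2) * e2sq + (14/3 - 4*√2) * e7sq)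
        | exact sqrt_eq_of_sq' _ _ (by linarith) (by
            linear_combination (-1) * hzK + hsq + hzsq + (2 - 2*r) * hs
              + (-12 + 4*√7 + (4/9)*(√3)^2 + 6*√2 - 2*(√2*√7) - (1/9)*(√14*(√3)^2)
                + (1/9)*(r*(√3)^2)) * hr
              + (34/3 - 4*√7 - (8/9)*(√3)^2 - 6*√2 + 2*(√2*√7) + (1/9)*(√2*(√3)^2*√7)
                + (1/9)*(√14*(√3)^2)) * h14
              + (16/9 - (8/9)*(√2*√7) + (1/9)*((√2)^2*(√7)^2)) * e3sq
              + ((-6)*√7 + (7/3)*(√7)^2) * e2sq + (14/3 - 4*√2) * e7sq))
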